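/- Fix λ ∈ k. Define the one-step rewriting relation →_Π on V = 𝔖(Z) →₀ k (the rewriting system of the Rota-Baxter operator identity ⌊x⌋⌊y⌋ = ⌊x⌊y⌋⌋ + ⌊⌊x⌋y⌋ + λ⌊xy⌋ of weight λ): f →_Π g iff there exist a context q and nonempty bracketed words u, v such that the word t := q[⌊u⌋ ++ ⌊v⌋] lies in supp(f) and g = f − f(t)·δ_t + f(t)·( δ_{q[⌊u ++ ⌊v⌋⌋]} + δ_{q[⌊⌊u⌋ ++ v⌋]} + λ·δ_{q[⌊u ++ v⌋]} ). Then →_Π is convergent (terminating and confluent). -/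

import Mathlib

/-- Bracketed letters on `Z`: either a generator, or the letter `⌊w⌋` obtained by
applying the formal operator `⌊ ⌋` to a nonempty word `w = h :: t`. -/
inductive BLtr (Z : Type*) where
  | of : Z → BLtr Z
  | flr : BLtr Z → List (BLtr Z) → BLtr Z

/-- Bracketed words on `Z`: nonempty lists of bracketed letters. -/
def BWord (Z : Type*) := {l : List (BLtr Z) // l ≠ []}

/-- Concatenation of bracketed words. -/
def BWord.cat {Z : Type*} (u v : BWord Z) : BWord Z :=
  ⟨u.1 ++ v.1, by
    intro h
    rcases List.append_eq_nil_iff.mp h with ⟨h1, _⟩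
    exact u.2 h1⟩

/-- `⌊w⌋`: the one-letter word obtained by applying the formal operator to `w`. -/
def BWord.flr {Z : Type*} (w : BWord Z) : BWord Z :=
  ⟨[BLtr.flr (w.1.head w.2) w.1.tail], by simp⟩

/-- Contexts (`⋆`-words) on `Z`. -/
inductive Ctx (Z : Type*) where
  | base : List (BLtr Z) → List (BLtr Z) → Ctx Z
  | deep : List (BLtr Z) → List (BLtr Z) → Ctx Z → Ctx Z

/-- Substitution of a bracketed word into a context. -/
def Ctx.subst {Z : Type*} : Ctx Z → BWord Z → BWord Z
  | .base l r, u => ⟨l ++ u.1 ++ r, by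
      intro h
      rcases List.append_eq_nil_iff.mp h with ⟨h1, _⟩
      rcases List.append_eq_nil_iff.mp h1 with ⟨_, h2⟩
      exact u.2 h2⟩
  | .deep l r q, u => ⟨l ++ (BWord.flr (q.subst u)).1 ++ r, by
      intro h
      rcases List.append_eq_nil_iff.mp h with ⟨h1, _⟩
      rcases List.append_eq_nil_iff.mp h1 with ⟨_, h2⟩
      exact (BWord.flr (q.subst u)).2 h2⟩

/-- Termination of a binary relation: no infinite chain of one-step rewritings. -/
def RelTerminating {V : Type*} (r : V → V → Prop) : Prop :=
  ¬ ∃ f : ℕ → V, ∀ n, r (f n) (f (n + 1))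

/-- Confluence of a binary relation. -/
def RelConfluent {V : Type*} (r : V → V → Prop) : Prop :=
  ∀ f g₁ g₂ : V, Relation.ReflTransGen r f g₁ → Relation.ReflTransGen r f g₂ →
    ∃ h, Relation.ReflTransGen r g₁ h ∧ Relation.ReflTransGen r g₂ h

/-- One-step rewriting relation of the Rota-Baxter identity
`⌊x⌋⌊y⌋ = ⌊x⌊y⌋⌋ + ⌊⌊x⌋y⌋ + λ⌊xy⌋` of weight `λ`. -/
def RBStep {Z k : Type*} [Field k] (lam : k) (f g : BWord Z →₀ k) : Prop :=
  ∃ (q : Ctx Z) (u v : BWord Z),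
    f (q.subst ((u.flr).cat v.flr)) ≠ 0 ∧
    g = f - Finsupp.single (q.subst ((u.flr).cat v.flr)) (f (q.subst ((u.flr).cat v.flr)))
        + f (q.subst ((u.flr).cat v.flr)) •
          (Finsupp.single (q.subst (BWord.flr (u.cat v.flr))) (1 : k)
            + Finsupp.single (q.subst (BWord.flr ((u.flr).cat v))) (1 : k)
            + lam • Finsupp.single (q.subst (BWord.flr (u.cat v))) (1 : k))

namespace RBaux

variable {Z : Type*} {k : Type*} [Field k]

open Finsupp

abbrev W (Z : Type*) := List (BLtr Z)
abbrev AV (Z : Type*) (k : Type*) [Field k] := W Z →₀ k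

def flr' : W Z → W Z
  | [] => []
  | h :: t => [BLtr.flr h t]

mutual
  def phiL : BLtr Z → ℕ
    | .of _ => 2
    | .flr h t => phiL h * phiW t + 1
  def phiW : W Z → ℕ
    | [] => 1
    | l :: w => phiL l * phiW w
end

@[simp] lemma phiW_nil : phiW ([] : W Z) = 1 := rfl
@[simp] lemma phiW_cons (l : BLtr Z) (w : W Z) : phiW (l :: w) = phiL l * phiW w := by
  rw [phiW]

lemma phiW_append (x y : W Z) : phiW (x ++ y) = phiW x * phiW y := by
  induction x with
  | nil => simp
  | cons l x ih => simp [ih]; ring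

lemma phiL_one_le (l : BLtr Z) : 1 ≤ phiL l := by
  cases l with
  | of z => simp [phiL]
  | flr h t => rw [phiL]; omega

lemma phiW_one_le (w : W Z) : 1 ≤ phiW w := by
  induction w with
  | nil => simp
  | cons l w ih => have := phiL_one_le l; simp; nlinarith

lemma phiL_two_le (l : BLtr Z) : 2 ≤ phiL l := by
  cases l with
  | of z => simp [phiL]
  | flr h t =>
    rw [phiL]
    have h1 := phiL_one_le h
    have h2 := phiW_one_le t
    nlinarith

lemma phiW_two_le {w : W Z} (h : w ≠ []) : 2 ≤ phiW w := by
  cases w with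
  | nil => simp at h
  | cons l w =>
    have := phiL_two_le l
    have := phiW_one_le w
    simp; nlinarith

lemma phiW_concat (u : W Z) (l : BLtr Z) : phiW (u ++ [l]) = phiW u * phiL l := by
  rw [phiW_append]; simp

lemma phiL_le_getLast {u : W Z} {l : BLtr Z} (h : u.getLast? = some l) :
    phiL l ≤ phiW u := by
  induction u with
  | nil => simp at h
  | cons a u ih =>
    cases u with
    | nil =>
      simp [List.getLast?] at h
      subst h; simp
    | cons b u =>
      rw [List.getLast?_cons_cons] at h
      have h1 := ih h
      have h2 := phiL_one_le a
      have h3 := phiW_one_le (b :: u)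
      simp at h1 ⊢
      nlinarith

@[simp] lemma phiW_flr' {w : W Z} (h : w ≠ []) : phiW (flr' w) = phiW w + 1 := by
  cases w with
  | nil => simp at h
  | cons a t => simp [flr', phiL]

variable (lam : k)

lemma phiW_reverse (w : W Z) : phiW w.reverse = phiW w := by
  induction w with
  | nil => simp
  | cons l w ih => simp [phiW_append, ih]; ring

noncomputable def mr : W Z → W Z → AV Z k
  | ru, [] => Finsupp.single ru.reverse 1
  | BLtr.flr ha ta :: ru, BLtr.flr hb tb :: v =>
      Finsupp.mapDomain (fun x => ru.reverse ++ flr' x ++ v)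
        (mr (ha :: ta).reverse [BLtr.flr hb tb] + mr [BLtr.flr ha ta] (hb :: tb)
          + lam • mr (ha :: ta).reverse (hb :: tb))
  | ru, b :: v => Finsupp.single (ru.reverse ++ b :: v) 1
  termination_by ru v => phiW ru * phiW v
  decreasing_by
  all_goals {
    simp only [phiW_reverse, phiW_cons, phiW_nil, phiL]
    have h2 := phiL_one_le ha
    have h3 := phiW_one_le ta
    have h4 := phiL_one_le hb
    have h5 := phiW_one_le tb
    have h6 := phiW_one_le v
    have h7 := phiW_one_le ru
    have key : (phiL ha * phiW ta + 1) * ((phiL hb * phiW tb + 1) * 1) ≤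
        (phiL ha * phiW ta + 1) * phiW ru * ((phiL hb * phiW tb + 1) * phiW v) := by
      calc (phiL ha * phiW ta + 1) * ((phiL hb * phiW tb + 1) * 1)
          ≤ (phiL ha * phiW ta + 1) * ((phiL hb * phiW tb + 1) * phiW v) :=
            Nat.mul_le_mul le_rfl (Nat.mul_le_mul le_rfl h6)
        _ ≤ ((phiL ha * phiW ta + 1) * phiW ru) * ((phiL hb * phiW tb + 1) * phiW v) :=
            Nat.mul_le_mul (Nat.le_mul_of_pos_right _ h7) le_rfl
    nlinarith }

noncomputable def m (u v : W Z) : AV Z k := mr lam u.reverse v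

noncomputable def Xc (a b : W Z) : AV Z k :=
  m lam a (flr' b) + m lam (flr' a) b + lam • m lam a b

@[simp] lemma m_nil_right (u : W Z) : m lam u [] = Finsupp.single u 1 := by
  rw [m, mr]; simp

@[simp] lemma m_nil_left (v : W Z) : m lam [] v = Finsupp.single v 1 := by
  cases v with
  | nil => rw [m, mr]; simp
  | cons b v => rw [m, mr] <;> simp

lemma m_clash (u₀ : W Z) (ha : BLtr Z) (ta : W Z) (hb : BLtr Z) (tb : W Z) (v : W Z) :
    m lam (u₀ ++ [BLtr.flr ha ta]) (BLtr.flr hb tb :: v)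
      = Finsupp.mapDomain (fun x => u₀ ++ flr' x ++ v) (Xc lam (ha :: ta) (hb :: tb)) := by
  rw [m]
  rw [List.reverse_append]
  simp only [List.reverse_cons, List.reverse_nil, List.nil_append, List.singleton_append]
  rw [mr]
  simp [Xc, m, flr']

lemma m_concat_noflr_left (u₀ : W Z) (l : BLtr Z) (b : BLtr Z) (v : W Z)
    (h : ∀ ha ta, l ≠ BLtr.flr ha ta) :
    m lam (u₀ ++ [l]) (b :: v) = Finsupp.single (u₀ ++ [l] ++ b :: v) 1 := by
  rw [m]
  cases l with
  | of z =>
    rw [List.reverse_append]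
    simp only [List.reverse_cons, List.reverse_nil, List.nil_append, List.singleton_append]
    rw [mr] <;> simp
  | flr ha ta => exact absurd rfl (h ha ta)

lemma m_cons_noflr_right (u : W Z) (b : BLtr Z) (v : W Z)
    (h : ∀ hb tb, b ≠ BLtr.flr hb tb) :
    m lam u (b :: v) = Finsupp.single (u ++ b :: v) 1 := by
  rw [m]
  cases b with
  | of z =>
    cases hr : u.reverse with
    | nil =>
      have : u = [] := by simpa using congrArg List.reverse hr
      subst this
      rw [mr] <;> simp
    | cons a ru =>
      cases a with
      | of z' => rw [mr] <;> simp [← hr]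
      | flr ha ta => rw [mr] <;> simp [← hr]
  | flr hb tb => exact absurd rfl (h hb tb)

noncomputable def inl (u : W Z) : AV Z k →ₗ[k] AV Z k :=
  Finsupp.lsum k fun v => LinearMap.toSpanSingleton k (AV Z k) (m lam u v)

noncomputable def mulL : AV Z k →ₗ[k] AV Z k →ₗ[k] AV Z k :=
  Finsupp.lsum k fun u => LinearMap.toSpanSingleton k _ (inl lam u)

noncomputable def PL : AV Z k →ₗ[k] AV Z k := Finsupp.lmapDomain k k flr'

@[simp] lemma PL_single (w : W Z) (c : k) :
    PL (Finsupp.single w c) = Finsupp.single (flr' w) c := by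
  simp [PL, Finsupp.lmapDomain_apply, Finsupp.mapDomain_single]

lemma inl_single (u v : W Z) (c : k) :
    inl lam u (Finsupp.single v c) = c • m lam u v := by
  simp [inl, Finsupp.lsum_single, LinearMap.toSpanSingleton_apply]

lemma mulL_single (u : W Z) (c : k) (g : AV Z k) :
    mulL lam (Finsupp.single u c) g = c • inl lam u g := by
  simp [mulL, Finsupp.lsum_single, LinearMap.toSpanSingleton_apply]

lemma mul_single_single (u v : W Z) (c d : k) :
    mulL lam (Finsupp.single u c) (Finsupp.single v d) = (c * d) • m lam u v := by
  rw [mulL_single, inl_single, smul_smul]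

lemma mul_single_one (u v : W Z) :
    mulL lam (Finsupp.single u (1:k)) (Finsupp.single v (1:k)) = m lam u v := by
  simp [mul_single_single]

lemma linmap_sum (L : AV Z k →ₗ[k] AV Z k) (F : AV Z k) :
    L F = F.sum fun x c => c • L (Finsupp.single x 1) := by
  conv_lhs => rw [← Finsupp.sum_single F]
  rw [map_finsuppSum]
  apply Finsupp.sum_congr
  intro x _
  rw [← Finsupp.smul_single_one, map_smul]

lemma sum_smul_single (g : W Z → W Z) (F : AV Z k) :
    (F.sum fun x c => c • Finsupp.single (g x) (1:k)) = Finsupp.mapDomain g F := by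
  rw [Finsupp.mapDomain]
  apply Finsupp.sum_congr
  intro x _
  rw [Finsupp.smul_single, smul_eq_mul, mul_one]

lemma mul_nil_left (g : AV Z k) : mulL lam (Finsupp.single [] (1:k)) g = g := by
  rw [mulL_single, one_smul, linmap_sum (inl lam [])]
  simp only [inl_single, one_smul, m_nil_left]
  rw [show (fun (x : W Z) (c : k) => c • Finsupp.single x (1:k))
      = fun x c => c • Finsupp.single (id x) (1:k) from rfl, sum_smul_single]
  simp [Finsupp.mapDomain_id]

lemma mul_nil_right (f : AV Z k) : mulL lam f (Finsupp.single [] (1:k)) = f := by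
  have : mulL lam f (Finsupp.single [] (1:k))
      = LinearMap.flip (mulL lam) (Finsupp.single [] (1:k)) f := rfl
  rw [this, linmap_sum (LinearMap.flip (mulL lam) (Finsupp.single [] (1:k)))]
  simp only [LinearMap.flip_apply, mul_single_one, m_nil_right]
  rw [show (fun (x : W Z) (c : k) => c • Finsupp.single x (1:k))
      = fun x c => c • Finsupp.single (id x) (1:k) from rfl, sum_smul_single]
  simp [Finsupp.mapDomain_id]

lemma m_apply_nil_aux (n : ℕ) : ∀ (u v : W Z), phiW u * phiW v ≤ n →
    (u ≠ [] ∨ v ≠ []) → m lam u v [] = 0 := by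
  induction n using Nat.strong_induction_on with
  | _ n ih =>
    intro u v hn hne
    classical
    cases v with
    | nil =>
      rw [m_nil_right]
      rcases hne with h | h
      · exact Finsupp.single_eq_of_ne' h
      · exact absurd rfl h
    | cons b v' =>
      rcases List.eq_nil_or_concat u with rfl | ⟨u₀, l, rfl⟩
      · rw [m_nil_left]
        exact Finsupp.single_eq_of_ne' (by simp)
      · simp only [List.concat_eq_append] at hn hne ⊢
        cases l with
        | of z =>
          rw [m_concat_noflr_left lam _ _ _ _ (by intro _ _ h; cases h)]
          exact Finsupp.single_eq_of_ne' (by simp)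
        | flr ha ta =>
          cases b with
          | of z =>
            rw [m_cons_noflr_right lam _ _ _ (by intro _ _ h; cases h)]
            exact Finsupp.single_eq_of_ne' (by simp)
          | flr hb tb =>
            rw [m_clash]
            have hX : Xc lam (ha :: ta) (hb :: tb) [] = 0 := by
              have b1 : phiW (ha :: ta) * phiW (flr' (hb :: tb)) < n := by
                refine lt_of_lt_of_le ?_ hn
                rw [phiW_flr' (by simp), phiW_append]
                simp only [phiW_cons, phiW_nil, phiL]
                have h2 := phiL_one_le ha
                have h3 := phiW_one_le ta
                have h4 := phiW_one_le v'
                have h5 := phiW_one_le u₀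
                have hUV : (phiL ha * phiW ta + 1) * (phiL hb * phiW tb + 1)
                    ≤ phiW u₀ * ((phiL ha * phiW ta + 1) * 1)
                      * ((phiL hb * phiW tb + 1) * phiW v') := by
                  calc (phiL ha * phiW ta + 1) * (phiL hb * phiW tb + 1)
                      = 1 * ((phiL ha * phiW ta + 1) * 1) * ((phiL hb * phiW tb + 1) * 1) := by
                        ring
                    _ ≤ _ := Nat.mul_le_mul (Nat.mul_le_mul h5 le_rfl)
                        (Nat.mul_le_mul le_rfl h4)
                nlinarith
              have b2 : phiW (flr' (ha :: ta)) * phiW (hb :: tb) < n := by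
                refine lt_of_lt_of_le ?_ hn
                rw [phiW_flr' (by simp), phiW_append]
                simp only [phiW_cons, phiW_nil, phiL]
                have h2 := phiL_one_le hb
                have h3 := phiW_one_le tb
                have h4 := phiW_one_le v'
                have h5 := phiW_one_le u₀
                have hUV : (phiL ha * phiW ta + 1) * (phiL hb * phiW tb + 1)
                    ≤ phiW u₀ * ((phiL ha * phiW ta + 1) * 1)
                      * ((phiL hb * phiW tb + 1) * phiW v') := by
                  calc (phiL ha * phiW ta + 1) * (phiL hb * phiW tb + 1)
                      = 1 * ((phiL ha * phiW ta + 1) * 1) * ((phiL hb * phiW tb + 1) * 1) := by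
                        ring
                    _ ≤ _ := Nat.mul_le_mul (Nat.mul_le_mul h5 le_rfl)
                        (Nat.mul_le_mul le_rfl h4)
                nlinarith
              have b3 : phiW (ha :: ta) * phiW (hb :: tb) < n := by
                refine lt_of_lt_of_le ?_ hn
                rw [phiW_append]
                simp only [phiW_cons, phiW_nil, phiL]
                have h2 := phiL_one_le ha
                have h3 := phiW_one_le ta
                have h4 := phiW_one_le v'
                have h5 := phiW_one_le u₀
                have h6 := phiL_one_le hb
                have h7 := phiW_one_le tb
                have hUV : (phiL ha * phiW ta + 1) * (phiL hb * phiW tb + 1)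
                    ≤ phiW u₀ * ((phiL ha * phiW ta + 1) * 1)
                      * ((phiL hb * phiW tb + 1) * phiW v') := by
                  calc (phiL ha * phiW ta + 1) * (phiL hb * phiW tb + 1)
                      = 1 * ((phiL ha * phiW ta + 1) * 1) * ((phiL hb * phiW tb + 1) * 1) := by
                        ring
                    _ ≤ _ := Nat.mul_le_mul (Nat.mul_le_mul h5 le_rfl)
                        (Nat.mul_le_mul le_rfl h4)
                nlinarith
              have e1 : m lam (ha :: ta) (flr' (hb :: tb)) [] = 0 :=
                ih _ b1 _ _ le_rfl (Or.inl (by simp))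
              have e2 : m lam (flr' (ha :: ta)) (hb :: tb) [] = 0 :=
                ih _ b2 _ _ le_rfl (Or.inr (by simp))
              have e3 : m lam (ha :: ta) (hb :: tb) [] = 0 :=
                ih _ b3 _ _ le_rfl (Or.inl (by simp))
              simp [Xc, Finsupp.add_apply, Finsupp.smul_apply, e1, e2, e3]
            have hsupp : ∀ x ∈ (Xc lam (ha :: ta) (hb :: tb)).support,
                (fun x => u₀ ++ flr' x ++ v') x ≠ ([] : W Z) := by
              intro x hx
              have hxne : x ≠ [] := by
                intro h; subst h
                exact (Finsupp.mem_support_iff.mp hx) hX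
              cases x with
              | nil => exact absurd rfl hxne
              | cons a t => simp [flr']
            rw [← Finsupp.notMem_support_iff]
            intro hmem
            have := Finsupp.mapDomain_support hmem
            rw [Finset.mem_image] at this
            obtain ⟨x, hx, hfx⟩ := this
            exact hsupp x hx hfx

lemma m_apply_nil {u v : W Z} (hne : u ≠ [] ∨ v ≠ []) : m lam u v [] = 0 :=
  m_apply_nil_aux lam (phiW u * phiW v) u v le_rfl hne

lemma Xc_apply_nil {a b : W Z} (ha : a ≠ []) (hb : b ≠ []) : Xc lam a b [] = 0 := by
  simp [Xc, Finsupp.add_apply, Finsupp.smul_apply,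
    m_apply_nil lam (Or.inl ha), m_apply_nil lam (Or.inr hb)]

lemma Xc_eq (a b : W Z) :
    Xc lam a b = mulL lam (Finsupp.single a 1) (PL (Finsupp.single b (1:k)))
      + mulL lam (PL (Finsupp.single a (1:k))) (Finsupp.single b 1)
      + lam • mulL lam (Finsupp.single a 1) (Finsupp.single b 1) := by
  rw [Xc, PL_single, PL_single, mul_single_one, mul_single_one, mul_single_one]

lemma Pmul (ha : BLtr Z) (ta : W Z) (hb : BLtr Z) (tb : W Z) :
    m lam (flr' (ha :: ta)) (flr' (hb :: tb)) = PL (Xc lam (ha :: ta) (hb :: tb)) := by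
  have : flr' (ha :: ta) = [] ++ [BLtr.flr ha ta] := by simp [flr']
  rw [this, show flr' (hb :: tb) = BLtr.flr hb tb :: [] from rfl, m_clash]
  rw [PL, Finsupp.lmapDomain_apply]
  apply Finsupp.mapDomain_congr
  intro x _
  simp

lemma linmap_mapDomain (L : AV Z k →ₗ[k] AV Z k) (σ : W Z → W Z) (F : AV Z k) :
    L (Finsupp.mapDomain σ F) = F.sum fun x c => c • L (Finsupp.single (σ x) 1) := by
  rw [Finsupp.mapDomain, map_finsuppSum]
  apply Finsupp.sum_congr
  intro x _
  rw [← Finsupp.smul_single_one, map_smul]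

lemma mul_mapDomain_left (σ : W Z → W Z) (F g : AV Z k) :
    mulL lam (Finsupp.mapDomain σ F) g
      = F.sum fun x c => c • mulL lam (Finsupp.single (σ x) 1) g := by
  have : mulL lam (Finsupp.mapDomain σ F) g
      = LinearMap.flip (mulL lam) g (Finsupp.mapDomain σ F) := rfl
  rw [this, linmap_mapDomain]
  rfl

lemma mul_mapDomain_right (u : W Z) (σ : W Z → W Z) (F : AV Z k) :
    mulL lam (Finsupp.single u 1) (Finsupp.mapDomain σ F)
      = F.sum fun x c => c • m lam u (σ x) := by
  rw [linmap_mapDomain (mulL lam (Finsupp.single u 1))]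
  apply Finsupp.sum_congr
  intro x _
  rw [mul_single_one]

lemma smul_mapDomain_single (c : k) (t : W Z) (G : AV Z k) (g : W Z → W Z) :
    c • Finsupp.mapDomain g G = G.sum fun y d => Finsupp.single (g y) (c * d) := by
  rw [Finsupp.mapDomain, Finsupp.smul_sum]
  apply Finsupp.sum_congr
  intro y _
  rw [Finsupp.smul_single, smul_eq_mul]

lemma exch (F G : AV Z k) (g : W Z → W Z → W Z) :
    (F.sum fun x c => c • Finsupp.mapDomain (fun y => g x y) G)
      = G.sum fun y d => d • Finsupp.mapDomain (fun x => g x y) F := by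
  have l1 : (F.sum fun x c => c • Finsupp.mapDomain (fun y => g x y) G)
      = F.sum fun x c => G.sum fun y d => Finsupp.single (g x y) (c * d) := by
    apply Finsupp.sum_congr
    intro x _
    rw [smul_mapDomain_single (t := [])]
  have l2 : (G.sum fun y d => d • Finsupp.mapDomain (fun x => g x y) F)
      = G.sum fun y d => F.sum fun x c => Finsupp.single (g x y) (d * c) := by
    apply Finsupp.sum_congr
    intro y _
    rw [smul_mapDomain_single (t := [])]
  rw [l1, l2, Finsupp.sum_comm]
  apply Finsupp.sum_congr
  intro y _
  apply Finsupp.sum_congr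
  intro x _
  rw [mul_comm]

lemma linmap_sum' (L : AV Z k →ₗ[k] AV Z k) (F : AV Z k) :
    (F.sum fun x c => c • L (Finsupp.single x 1)) = L F := (linmap_sum L F).symm

lemma noclash_m (p : W Z) (l b : BLtr Z) (rest : W Z)
    (h : ∀ hc tc hd td, ¬(l = BLtr.flr hc tc ∧ b = BLtr.flr hd td)) :
    m lam (p ++ [l]) (b :: rest) = Finsupp.single (p ++ [l] ++ b :: rest) 1 := by
  cases l with
  | of z => exact m_concat_noflr_left lam _ _ _ _ (by intro _ _ hh; cases hh)
  | flr hc tc =>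
    cases b with
    | of z => exact m_cons_noflr_right lam _ _ _ (by intro _ _ hh; cases hh)
    | flr hd td => exact absurd ⟨rfl, rfl⟩ (h hc tc hd td)

noncomputable def TR (d : W Z) : AV Z k →ₗ[k] AV Z k :=
  LinearMap.flip (mulL lam) (PL (Finsupp.single d 1))
    + (LinearMap.flip (mulL lam) (Finsupp.single d 1)).comp PL
    + lam • LinearMap.flip (mulL lam) (Finsupp.single d 1)

noncomputable def SL (a : W Z) : AV Z k →ₗ[k] AV Z k :=
  (mulL lam (Finsupp.single a 1)).comp PL
    + mulL lam (PL (Finsupp.single a 1))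
    + lam • mulL lam (Finsupp.single a 1)

lemma TR_single (x d : W Z) : TR lam d (Finsupp.single x 1) = Xc lam x d := by
  simp only [TR, LinearMap.add_apply, LinearMap.comp_apply, LinearMap.smul_apply,
    LinearMap.flip_apply, PL_single, mul_single_one, Xc]

lemma SL_single (a y : W Z) : SL lam a (Finsupp.single y 1) = Xc lam a y := by
  simp only [SL, LinearMap.add_apply, LinearMap.comp_apply, LinearMap.smul_apply,
    PL_single, mul_single_one, Xc]

lemma Pmul' {a b : W Z} (ha : a ≠ []) (hb : b ≠ []) :
    PL (Xc lam a b) = m lam (flr' a) (flr' b) := by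
  cases a with
  | nil => exact absurd rfl ha
  | cons a0 as =>
    cases b with
    | nil => exact absurd rfl hb
    | cons b0 bs => exact (Pmul lam a0 as b0 bs).symm

lemma key1 (a b d : W Z) (ha : a ≠ []) (hb : b ≠ []) (hd : d ≠ [])
    (I1 : mulL lam (m lam a (flr' b)) (Finsupp.single (flr' d) 1)
      = mulL lam (Finsupp.single a 1) (m lam (flr' b) (flr' d)))
    (I2 : mulL lam (m lam (flr' a) b) (Finsupp.single (flr' d) 1)
      = mulL lam (Finsupp.single (flr' a) 1) (m lam b (flr' d)))
    (I3 : mulL lam (m lam a b) (Finsupp.single (flr' d) 1)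
      = mulL lam (Finsupp.single a 1) (m lam b (flr' d)))
    (I4 : mulL lam (m lam (flr' a) (flr' b)) (Finsupp.single d 1)
      = mulL lam (Finsupp.single (flr' a) 1) (m lam (flr' b) d))
    (I5 : mulL lam (m lam a (flr' b)) (Finsupp.single d 1)
      = mulL lam (Finsupp.single a 1) (m lam (flr' b) d))
    (I6 : mulL lam (m lam (flr' a) b) (Finsupp.single d 1)
      = mulL lam (Finsupp.single (flr' a) 1) (m lam b d))
    (I7 : mulL lam (m lam a b) (Finsupp.single d 1)
      = mulL lam (Finsupp.single a 1) (m lam b d)) :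
    TR lam d (Xc lam a b) = SL lam a (Xc lam b d) := by
  have hTR : TR lam d (Xc lam a b)
      = mulL lam (Xc lam a b) (PL (Finsupp.single d 1))
        + mulL lam (PL (Xc lam a b)) (Finsupp.single d 1)
        + lam • mulL lam (Xc lam a b) (Finsupp.single d 1) := by
    simp only [TR, LinearMap.add_apply, LinearMap.comp_apply, LinearMap.smul_apply,
      LinearMap.flip_apply]
  have hSL : SL lam a (Xc lam b d)
      = mulL lam (Finsupp.single a 1) (PL (Xc lam b d))
        + mulL lam (PL (Finsupp.single a 1)) (Xc lam b d)
        + lam • mulL lam (Finsupp.single a 1) (Xc lam b d) := by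
    simp only [SL, LinearMap.add_apply, LinearMap.comp_apply, LinearMap.smul_apply]
  rw [hTR, hSL, Pmul' lam ha hb, Pmul' lam hb hd, PL_single, PL_single]
  simp only [Xc, map_add, map_smul, LinearMap.add_apply, LinearMap.smul_apply]
  rw [I1, I2, I3, I4, I5, I6, I7]
  module

lemma Xc_supp_ne {a b x : W Z} (ha : a ≠ []) (hb : b ≠ [])
    (hx : x ∈ (Xc lam a b).support) : x ≠ [] := by
  intro h
  subst h
  exact (Finsupp.mem_support_iff.mp hx) (Xc_apply_nil lam ha hb)

lemma m_clash' (ha : BLtr Z) (ta : W Z) (hb : BLtr Z) (tb : W Z) (v : W Z) :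
    m lam [BLtr.flr ha ta] (BLtr.flr hb tb :: v)
      = Finsupp.mapDomain (fun x => flr' x ++ v) (Xc lam (ha :: ta) (hb :: tb)) := by
  have h := m_clash lam [] ha ta hb tb v
  simpa using h

lemma cube_lt1 {x y z A B D : ℕ} (hx : x ≤ A) (hy : y ≤ B + 1) (hz : z ≤ D + 1) :
    x * y * z < (A + 1) * (B + 1) * (D + 1) := by
  calc x * y * z ≤ A * (B + 1) * (D + 1) := Nat.mul_le_mul (Nat.mul_le_mul hx hy) hz
    _ < A * (B + 1) * (D + 1) + (B + 1) * (D + 1) :=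
        Nat.lt_add_of_pos_right (Nat.mul_pos (Nat.succ_pos B) (Nat.succ_pos D))
    _ = (A + 1) * (B + 1) * (D + 1) := by ring

lemma cube_lt2 {x y z A B D : ℕ} (hx : x ≤ A + 1) (hy : y ≤ B) (hz : z ≤ D + 1) :
    x * y * z < (A + 1) * (B + 1) * (D + 1) := by
  calc x * y * z ≤ (A + 1) * B * (D + 1) := Nat.mul_le_mul (Nat.mul_le_mul hx hy) hz
    _ < (A + 1) * B * (D + 1) + (A + 1) * (D + 1) :=
        Nat.lt_add_of_pos_right (Nat.mul_pos (Nat.succ_pos A) (Nat.succ_pos D))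
    _ = (A + 1) * (B + 1) * (D + 1) := by ring

lemma cube_lt3 {x y z A B D : ℕ} (hx : x ≤ A + 1) (hy : y ≤ B + 1) (hz : z ≤ D) :
    x * y * z < (A + 1) * (B + 1) * (D + 1) := by
  calc x * y * z ≤ (A + 1) * (B + 1) * D := Nat.mul_le_mul (Nat.mul_le_mul hx hy) hz
    _ < (A + 1) * (B + 1) * D + (A + 1) * (B + 1) :=
        Nat.lt_add_of_pos_right (Nat.mul_pos (Nat.succ_pos A) (Nat.succ_pos B))
    _ = (A + 1) * (B + 1) * (D + 1) := by ring

theorem massoc_aux (n : ℕ) : ∀ u v w : W Z, phiW u * phiW v * phiW w ≤ n →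
    mulL lam (m lam u v) (Finsupp.single w 1)
      = mulL lam (Finsupp.single u 1) (m lam v w) := by
  induction n using Nat.strong_induction_on with
  | _ n ih =>
  intro u v w hn
  classical
  rcases w with _ | ⟨bw, w₀⟩
  · rw [m_nil_right, mul_nil_right, mul_single_one]
  rcases v with _ | ⟨bv, v₁⟩
  · rw [m_nil_right, m_nil_left, mul_single_one]
  rcases List.eq_nil_or_concat u with rfl | ⟨u₀, lu, rfl⟩
  · rw [m_nil_left, mul_single_one, mul_nil_left]
  simp only [List.concat_eq_append] at hn ⊢
  by_cases hc1 : ∃ ha' ta' hb' tb', lu = BLtr.flr ha' ta' ∧ bv = BLtr.flr hb' tb'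
  case neg =>
    have hc1' : ∀ hc tc hd td, ¬(lu = BLtr.flr hc tc ∧ bv = BLtr.flr hd td) := by
      intro hc tc hd td hh
      exact hc1 ⟨hc, tc, hd, td, hh.1, hh.2⟩
    have hm1 : ∀ rest : W Z, m lam (u₀ ++ [lu]) (bv :: rest)
        = Finsupp.single (u₀ ++ [lu] ++ bv :: rest) 1 :=
      fun rest => noclash_m lam u₀ lu bv rest hc1'
    obtain ⟨v₀, lv, hv⟩ : ∃ v₀ lv, bv :: v₁ = v₀ ++ [lv] := by
      rcases List.eq_nil_or_concat (bv :: v₁) with h | ⟨v₀, lv, h⟩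
      · simp at h
      · exact ⟨v₀, lv, by simpa using h⟩
    by_cases hc2 : ∃ hc' tc' hd' td', lv = BLtr.flr hc' tc' ∧ bw = BLtr.flr hd' td'
    case pos =>
      obtain ⟨hc, tc, hd, td, rfl, rfl⟩ := hc2
      rw [hm1 v₁, mul_single_one]
      have hL1 : u₀ ++ [lu] ++ bv :: v₁ = (u₀ ++ [lu] ++ v₀) ++ [BLtr.flr hc tc] := by
        rw [hv]; simp [List.append_assoc]
      rw [hL1, m_clash]
      have hR1 : m lam (bv :: v₁) (BLtr.flr hd td :: w₀)
          = Finsupp.mapDomain (fun y => v₀ ++ flr' y ++ w₀) (Xc lam (hc :: tc) (hd :: td)) := by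
        rw [hv, m_clash]
      rw [hR1, mul_mapDomain_right]
      have hpt : ((Xc lam (hc :: tc) (hd :: td)).sum fun y c =>
            c • m lam (u₀ ++ [lu]) (v₀ ++ flr' y ++ w₀))
          = (Xc lam (hc :: tc) (hd :: td)).sum fun y c =>
            c • Finsupp.single (u₀ ++ [lu] ++ v₀ ++ flr' y ++ w₀) 1 := by
        apply Finsupp.sum_congr
        intro y hy
        have hyne : y ≠ [] := Xc_supp_ne lam (by simp) (by simp) hy
        congr 1
        cases v₀ with
        | nil =>
          have hbv : bv = BLtr.flr hc tc := by
            have := hv; simp at this; exact this.1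
          cases lu with
          | of z =>
            cases y with
            | nil => exact absurd rfl hyne
            | cons y0 ys =>
              rw [show ([] : W Z) ++ flr' (y0 :: ys) ++ w₀
                  = BLtr.flr y0 ys :: w₀ from by simp [flr']]
              rw [m_concat_noflr_left lam _ _ _ _ (by intro _ _ hh; cases hh)]
              simp [flr']
          | flr hx tx => exact absurd ⟨rfl, hbv⟩ (hc1' hx tx hc tc)
        | cons b₁ v₂ =>
          rw [List.cons_append] at hv
          injection hv with h1 h2
          subst h1
          subst h2
          rw [show (bv :: v₂) ++ flr' y ++ w₀ = bv :: (v₂ ++ flr' y ++ w₀) from by simp]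
          rw [hm1 (v₂ ++ flr' y ++ w₀)]
          simp [List.append_assoc]
      rw [hpt, sum_smul_single]
    case neg =>
      have hc2' : ∀ hc tc hd td, ¬(lv = BLtr.flr hc tc ∧ bw = BLtr.flr hd td) := by
        intro hc tc hd td hh
        exact hc2 ⟨hc, tc, hd, td, hh.1, hh.2⟩
      rw [hm1 v₁, mul_single_one]
      have hL1 : u₀ ++ [lu] ++ bv :: v₁ = (u₀ ++ [lu] ++ v₀) ++ [lv] := by
        rw [hv]; simp [List.append_assoc]
      rw [hL1, noclash_m lam _ _ _ _ hc2']
      have hR1 : m lam (bv :: v₁) (bw :: w₀)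
          = Finsupp.single (v₀ ++ [lv] ++ bw :: w₀) 1 := by
        rw [hv, noclash_m lam _ _ _ _ hc2']
      rw [hR1]
      have hR2 : v₀ ++ [lv] ++ bw :: w₀ = bv :: (v₁ ++ bw :: w₀) := by
        rw [← List.cons_append, ← hv]
      rw [hR2]
      rw [mul_single_one]
      rw [hm1 (v₁ ++ bw :: w₀)]
      have hfin : v₀ ++ lv :: bw :: w₀ = bv :: (v₁ ++ bw :: w₀) := by
        rw [← hR2]; simp
      rw [show u₀ ++ [lu] ++ v₀ ++ [lv] ++ bw :: w₀
          = u₀ ++ [lu] ++ (v₀ ++ lv :: bw :: w₀) from by simp [List.append_assoc], hfin]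
  case pos =>
    obtain ⟨ha, ta, hb, tb, rfl, rfl⟩ := hc1
    rw [m_clash, mul_mapDomain_left]
    simp only [mul_single_one]
    rcases List.eq_nil_or_concat v₁ with rfl | ⟨v₃, lv, rfl⟩
    · -- v = [⌊b⌋]
      cases bw with
      | of z =>
        -- clash1, no clash2
        have hpt : ((Xc lam (ha :: ta) (hb :: tb)).sum fun x c =>
              c • m lam (u₀ ++ flr' x ++ []) (BLtr.of z :: w₀))
            = (Xc lam (ha :: ta) (hb :: tb)).sum fun x c =>
              c • Finsupp.single (u₀ ++ flr' x ++ BLtr.of z :: w₀) 1 := by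
          apply Finsupp.sum_congr
          intro x hx
          congr 1
          rw [List.append_nil]
          rw [m_cons_noflr_right lam _ _ _ (by intro _ _ hh; cases hh)]
        rw [hpt, sum_smul_single]
        have hR1 : m lam [BLtr.flr hb tb] (BLtr.of z :: w₀)
            = Finsupp.single (BLtr.flr hb tb :: BLtr.of z :: w₀) 1 := by
          rw [m_cons_noflr_right lam _ _ _ (by intro _ _ hh; cases hh)]
          simp
        rw [hR1, mul_single_one, m_clash]
      | flr hd td =>
        -- CRITICAL CASE
        have hA := phiW_one_le (ha :: ta)
        have hB := phiW_one_le (hb :: tb)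
        have hD := phiW_one_le (hd :: td)
        have hU := phiW_one_le u₀
        have hW := phiW_one_le w₀
        have hcur : (phiW (ha :: ta) + 1) * (phiW (hb :: tb) + 1) * (phiW (hd :: td) + 1)
            ≤ n := by
          refine le_trans ?_ hn
          rw [phiW_concat]
          have e1 : phiL (BLtr.flr ha ta) = phiW (ha :: ta) + 1 := by
            rw [phiL]; simp
          have e2 : phiL (BLtr.flr hb tb) = phiW (hb :: tb) + 1 := by
            rw [phiL]; simp
          have e3 : phiL (BLtr.flr hd td) = phiW (hd :: td) + 1 := by
            rw [phiL]; simp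
          simp only [phiW_cons, phiW_nil, e1, e2, e3]
          calc (phiW (ha :: ta) + 1) * (phiW (hb :: tb) + 1) * (phiW (hd :: td) + 1)
              ≤ (phiW u₀ * (phiW (ha :: ta) + 1)) * ((phiW (hb :: tb) + 1) * 1)
                * ((phiW (hd :: td) + 1) * phiW w₀) := by
                refine Nat.mul_le_mul (Nat.mul_le_mul ?_ ?_) ?_
                · exact Nat.le_mul_of_pos_left _ hU
                · simp
                · exact Nat.le_mul_of_pos_right _ hW
            _ = _ := by simp only [phiW_cons]; try ring
        have hI : ∀ p q r : W Z,
            phiW p * phiW q * phiW r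
              < (phiW (ha :: ta) + 1) * (phiW (hb :: tb) + 1) * (phiW (hd :: td) + 1) →
            mulL lam (m lam p q) (Finsupp.single r 1)
              = mulL lam (Finsupp.single p 1) (m lam q r) := by
          intro p q r hlt
          exact ih _ (lt_of_lt_of_le hlt hcur) p q r le_rfl
        have hfa : phiW (flr' (ha :: ta)) = phiW (ha :: ta) + 1 := phiW_flr' (by simp)
        have hfb : phiW (flr' (hb :: tb)) = phiW (hb :: tb) + 1 := phiW_flr' (by simp)
        have hfd : phiW (flr' (hd :: td)) = phiW (hd :: td) + 1 := phiW_flr' (by simp)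
        have I1 := hI (ha :: ta) (flr' (hb :: tb)) (flr' (hd :: td))
          (by rw [hfb, hfd]; exact cube_lt1 le_rfl le_rfl le_rfl)
        have I2 := hI (flr' (ha :: ta)) (hb :: tb) (flr' (hd :: td))
          (by rw [hfa, hfd]; exact cube_lt2 le_rfl le_rfl le_rfl)
        have I3 := hI (ha :: ta) (hb :: tb) (flr' (hd :: td))
          (by rw [hfd]; exact cube_lt1 le_rfl (Nat.le_succ _) le_rfl)
        have I4 := hI (flr' (ha :: ta)) (flr' (hb :: tb)) (hd :: td)
          (by rw [hfa, hfb]; exact cube_lt3 le_rfl le_rfl le_rfl)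
        have I5 := hI (ha :: ta) (flr' (hb :: tb)) (hd :: td)
          (by rw [hfb]; exact cube_lt1 le_rfl le_rfl (Nat.le_succ _))
        have I6 := hI (flr' (ha :: ta)) (hb :: tb) (hd :: td)
          (by rw [hfa]; exact cube_lt2 le_rfl le_rfl (Nat.le_succ _))
        have I7 := hI (ha :: ta) (hb :: tb) (hd :: td)
          (cube_lt1 le_rfl (Nat.le_succ _) (Nat.le_succ _))
        have hkey := key1 lam (ha :: ta) (hb :: tb) (hd :: td)
          (by simp) (by simp) (by simp) I1 I2 I3 I4 I5 I6 I7
        -- LHS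
        have hL : ((Xc lam (ha :: ta) (hb :: tb)).sum fun x c =>
              c • m lam (u₀ ++ flr' x ++ []) (BLtr.flr hd td :: w₀))
            = ((Finsupp.lmapDomain k k (fun y => u₀ ++ flr' y ++ w₀)).comp
                (TR lam (hd :: td))) (Xc lam (ha :: ta) (hb :: tb)) := by
          rw [linmap_sum ((Finsupp.lmapDomain k k (fun y => u₀ ++ flr' y ++ w₀)).comp
              (TR lam (hd :: td)))]
          apply Finsupp.sum_congr
          intro x hx
          have hxne : x ≠ [] := Xc_supp_ne lam (by simp) (by simp) hx
          congr 1
          cases x with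
          | nil => exact absurd rfl hxne
          | cons x0 xs =>
            rw [LinearMap.comp_apply, TR_single, Finsupp.lmapDomain_apply]
            rw [show u₀ ++ flr' (x0 :: xs) ++ [] = u₀ ++ [BLtr.flr x0 xs] from by
              simp [flr']]
            rw [m_clash]
        rw [hL]
        -- RHS
        rw [m_clash']
        rw [mul_mapDomain_right]
        have hR : ((Xc lam (hb :: tb) (hd :: td)).sum fun y c =>
              c • m lam (u₀ ++ [BLtr.flr ha ta]) (flr' y ++ w₀))
            = ((Finsupp.lmapDomain k k (fun y => u₀ ++ flr' y ++ w₀)).comp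
                (SL lam (ha :: ta))) (Xc lam (hb :: tb) (hd :: td)) := by
          rw [linmap_sum ((Finsupp.lmapDomain k k (fun y => u₀ ++ flr' y ++ w₀)).comp
              (SL lam (ha :: ta)))]
          apply Finsupp.sum_congr
          intro y hy
          have hyne : y ≠ [] := Xc_supp_ne lam (by simp) (by simp) hy
          congr 1
          cases y with
          | nil => exact absurd rfl hyne
          | cons y0 ys =>
            rw [LinearMap.comp_apply, SL_single, Finsupp.lmapDomain_apply]
            rw [show flr' (y0 :: ys) ++ w₀ = BLtr.flr y0 ys :: w₀ from by simp [flr']]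
            rw [m_clash]
        rw [hR]
        simp only [LinearMap.comp_apply, Finsupp.lmapDomain_apply]
        rw [hkey]
    · -- v₁ = v₃ ++ [lv]
      simp only [List.concat_eq_append] at *
      by_cases hc2 : ∃ hc' tc' hd' td', lv = BLtr.flr hc' tc' ∧ bw = BLtr.flr hd' td'
      case pos =>
        obtain ⟨hc, tc, hd, td, rfl, rfl⟩ := hc2
        -- both clashes, separated
        have hpt : ((Xc lam (ha :: ta) (hb :: tb)).sum fun x c =>
              c • m lam (u₀ ++ flr' x ++ (v₃ ++ [BLtr.flr hc tc])) (BLtr.flr hd td :: w₀))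
            = (Xc lam (ha :: ta) (hb :: tb)).sum fun x c =>
              c • Finsupp.mapDomain
                  (fun y => u₀ ++ flr' x ++ v₃ ++ flr' y ++ w₀)
                  (Xc lam (hc :: tc) (hd :: td)) := by
          apply Finsupp.sum_congr
          intro x hx
          congr 1
          rw [show u₀ ++ flr' x ++ (v₃ ++ [BLtr.flr hc tc])
              = (u₀ ++ flr' x ++ v₃) ++ [BLtr.flr hc tc] from by simp [List.append_assoc]]
          rw [m_clash]
        rw [hpt, exch]
        -- RHS
        have hR1 : m lam (BLtr.flr hb tb :: (v₃ ++ [BLtr.flr hc tc])) (BLtr.flr hd td :: w₀)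
            = Finsupp.mapDomain (fun y => (BLtr.flr hb tb :: v₃) ++ flr' y ++ w₀)
                (Xc lam (hc :: tc) (hd :: td)) := by
          rw [show BLtr.flr hb tb :: (v₃ ++ [BLtr.flr hc tc])
              = (BLtr.flr hb tb :: v₃) ++ [BLtr.flr hc tc] from by simp]
          rw [m_clash]
        rw [hR1, mul_mapDomain_right]
        apply Finsupp.sum_congr
        intro y hy
        congr 1
        rw [show (BLtr.flr hb tb :: v₃) ++ flr' y ++ w₀
            = BLtr.flr hb tb :: (v₃ ++ flr' y ++ w₀) from by simp]
        rw [m_clash]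
        congr 1
        funext x
        simp [List.append_assoc]
      case neg =>
        have hc2' : ∀ hc tc hd td, ¬(lv = BLtr.flr hc tc ∧ bw = BLtr.flr hd td) := by
          intro hc tc hd td hh
          exact hc2 ⟨hc, tc, hd, td, hh.1, hh.2⟩
        have hpt : ((Xc lam (ha :: ta) (hb :: tb)).sum fun x c =>
              c • m lam (u₀ ++ flr' x ++ (v₃ ++ [lv])) (bw :: w₀))
            = (Xc lam (ha :: ta) (hb :: tb)).sum fun x c =>
              c • Finsupp.single (u₀ ++ flr' x ++ (v₃ ++ [lv] ++ bw :: w₀)) 1 := by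
          apply Finsupp.sum_congr
          intro x hx
          congr 1
          rw [show u₀ ++ flr' x ++ (v₃ ++ [lv])
              = (u₀ ++ flr' x ++ v₃) ++ [lv] from by simp [List.append_assoc]]
          rw [noclash_m lam _ _ _ _ hc2']
          simp [List.append_assoc]
        rw [hpt, sum_smul_single]
        -- RHS
        have hR1 : m lam (BLtr.flr hb tb :: (v₃ ++ [lv])) (bw :: w₀)
            = Finsupp.single ((BLtr.flr hb tb :: v₃) ++ [lv] ++ bw :: w₀) 1 := by
          rw [show BLtr.flr hb tb :: (v₃ ++ [lv])
              = (BLtr.flr hb tb :: v₃) ++ [lv] from by simp]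
          rw [noclash_m lam _ _ _ _ hc2']
        rw [hR1]
        rw [show (BLtr.flr hb tb :: v₃) ++ [lv] ++ bw :: w₀
            = BLtr.flr hb tb :: (v₃ ++ [lv] ++ bw :: w₀) from by simp]
        rw [mul_single_one, m_clash]

theorem massoc (u v w : W Z) :
    mulL lam (mulL lam (Finsupp.single u 1) (Finsupp.single v 1)) (Finsupp.single w 1)
      = mulL lam (Finsupp.single u 1) (mulL lam (Finsupp.single v 1) (Finsupp.single w 1)) := by
  rw [mul_single_one, mul_single_one]
  exact massoc_aux lam (phiW u * phiW v * phiW w) u v w le_rfl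

theorem mul_assoc3 (f g h : AV Z k) :
    mulL lam (mulL lam f g) h = mulL lam f (mulL lam g h) := by
  induction f using Finsupp.induction_linear with
  | zero => simp
  | add f1 f2 hf1 hf2 => simp only [map_add, LinearMap.add_apply, hf1, hf2]
  | single u c =>
    induction g using Finsupp.induction_linear with
    | zero => simp
    | add g1 g2 hg1 hg2 => simp only [map_add, LinearMap.add_apply, hg1, hg2]
    | single v d =>
      induction h using Finsupp.induction_linear with
      | zero => simp
      | add h1 h2 hh1 hh2 => simp only [map_add, hh1, hh2]
      | single w e =>
        rw [← Finsupp.smul_single_one u c, ← Finsupp.smul_single_one v d,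
          ← Finsupp.smul_single_one w e]
        simp only [map_smul, LinearMap.smul_apply, LinearMap.map_smul]
        rw [massoc]

noncomputable def NF : W Z → AV Z k
  | [] => Finsupp.single [] 1
  | BLtr.of z :: w => mulL lam (Finsupp.single [BLtr.of z] 1) (NF w)
  | BLtr.flr h t :: w => mulL lam (PL (NF (h :: t))) (NF w)
  termination_by w => sizeOf w
  decreasing_by all_goals (simp; try omega)

@[simp] lemma NF_nil : NF lam ([] : W Z) = Finsupp.single [] 1 := by rw [NF]

lemma NF_cons_of (z : Z) (w : W Z) :
    NF lam (BLtr.of z :: w) = mulL lam (Finsupp.single [BLtr.of z] 1) (NF lam w) := by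
  rw [NF]

lemma NF_cons_flr (h : BLtr Z) (t w : W Z) :
    NF lam (BLtr.flr h t :: w) = mulL lam (PL (NF lam (h :: t))) (NF lam w) := by
  rw [NF]

lemma PL_apply_nil (f : AV Z k) : PL f [] = f [] := by
  classical
  rw [PL, Finsupp.lmapDomain_apply, Finsupp.mapDomain, Finsupp.sum_apply, Finsupp.sum]
  rw [Finset.sum_eq_single ([] : W Z)]
  · simp [flr']
  · intro x hx hxne
    apply Finsupp.single_eq_of_ne'
    cases x with
    | nil => exact absurd rfl hxne
    | cons a t => simp [flr']
  · intro h
    simp [Finsupp.notMem_support_iff.mp h, flr']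

lemma mul_apply_nil (f g : AV Z k) : (mulL lam f g) [] = f [] * g [] := by
  classical
  induction f using Finsupp.induction_linear with
  | zero => simp
  | add f1 f2 h1 h2 => simp [map_add, Finsupp.add_apply, h1, h2, add_mul]
  | single u c =>
    induction g using Finsupp.induction_linear with
    | zero => simp
    | add g1 g2 h1 h2 => simp [map_add, Finsupp.add_apply, h1, h2, mul_add]
    | single v d =>
      rw [mul_single_single, Finsupp.smul_apply]
      by_cases hu : u = []
      · subst hu
        by_cases hv : v = []
        · subst hv; rw [m_nil_left]; simp
        · rw [m_apply_nil lam (Or.inr hv), Finsupp.single_eq_of_ne' hv]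
          simp
      · rw [m_apply_nil lam (Or.inl hu), Finsupp.single_eq_of_ne' hu]
        simp

lemma RBid_single {u v : W Z} (hu : u ≠ []) (hv : v ≠ []) :
    mulL lam (PL (Finsupp.single u (1:k))) (PL (Finsupp.single v 1))
      = PL (mulL lam (Finsupp.single u 1) (PL (Finsupp.single v 1)))
        + PL (mulL lam (PL (Finsupp.single u (1:k))) (Finsupp.single v 1))
        + lam • PL (mulL lam (Finsupp.single u 1) (Finsupp.single v 1)) := by
  rw [PL_single, PL_single, mul_single_one, mul_single_one, mul_single_one,
    mul_single_one, ← Pmul' lam hu hv, Xc]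
  simp [map_add, map_smul]

lemma RBid (f g : AV Z k) (hf : f [] = 0) (hg : g [] = 0) :
    mulL lam (PL f) (PL g)
      = PL (mulL lam f (PL g)) + PL (mulL lam (PL f) g) + lam • PL (mulL lam f g) := by
  classical
  have key : ∀ u : W Z, u ≠ [] →
      mulL lam (PL (Finsupp.single u (1:k))) (PL g)
        = PL (mulL lam (Finsupp.single u 1) (PL g))
          + PL (mulL lam (PL (Finsupp.single u (1:k))) g)
          + lam • PL (mulL lam (Finsupp.single u 1) g) := by
    intro u hu
    have hL : mulL lam (PL (Finsupp.single u (1:k))) (PL g)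
        = ((mulL lam (PL (Finsupp.single u (1:k)))).comp PL) g := rfl
    have hR : PL (mulL lam (Finsupp.single u 1) (PL g))
          + PL (mulL lam (PL (Finsupp.single u (1:k))) g)
          + lam • PL (mulL lam (Finsupp.single u 1) g)
        = (PL.comp ((mulL lam (Finsupp.single u 1)).comp PL)
            + PL.comp (mulL lam (PL (Finsupp.single u (1:k))))
            + lam • PL.comp (mulL lam (Finsupp.single u 1))) g := by
      simp [LinearMap.add_apply, LinearMap.smul_apply, LinearMap.comp_apply]
    rw [hL, hR, linmap_sum _ g, linmap_sum _ g]
    apply Finsupp.sum_congr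
    intro v hv
    have hvne : v ≠ [] := fun h => Finsupp.mem_support_iff.mp hv (h ▸ hg)
    congr 1
    simp only [LinearMap.comp_apply, LinearMap.add_apply, LinearMap.smul_apply]
    exact RBid_single lam hu hvne
  have hL : mulL lam (PL f) (PL g) = (((mulL lam).flip (PL g)).comp PL) f := rfl
  have hR : PL (mulL lam f (PL g)) + PL (mulL lam (PL f) g) + lam • PL (mulL lam f g)
      = (PL.comp ((mulL lam).flip (PL g))
          + PL.comp (((mulL lam).flip g).comp PL)
          + lam • PL.comp ((mulL lam).flip g)) f := by
    simp [LinearMap.add_apply, LinearMap.smul_apply, LinearMap.comp_apply,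
      LinearMap.flip_apply]
  rw [hL, hR, linmap_sum _ f, linmap_sum _ f]
  apply Finsupp.sum_congr
  intro u hu
  have hune : u ≠ [] := fun h => Finsupp.mem_support_iff.mp hu (h ▸ hf)
  congr 1
  simp only [LinearMap.comp_apply, LinearMap.add_apply, LinearMap.smul_apply,
    LinearMap.flip_apply]
  exact key u hune

lemma NF_ne : ∀ (w : W Z), w ≠ [] → NF lam w [] = 0 := by
  intro w
  induction w using NF.induct with
  | case1 => intro h; exact absurd rfl h
  | case2 z w ih =>
    intro _
    rw [NF_cons_of, mul_apply_nil]
    rw [Finsupp.single_eq_of_ne' (by simp)]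
    simp
  | case3 h t w ih1 ih2 =>
    intro _
    rw [NF_cons_flr, mul_apply_nil, PL_apply_nil, ih1 (by simp)]
    simp

lemma NF_cons (l : BLtr Z) (w : W Z) :
    NF lam (l :: w) = mulL lam (NF lam [l]) (NF lam w) := by
  cases l with
  | of z =>
    rw [NF_cons_of, NF_cons_of, NF_nil, mul_nil_right]
  | flr h t =>
    rw [NF_cons_flr, NF_cons_flr, NF_nil, mul_nil_right]

lemma NF_append (x y : W Z) : NF lam (x ++ y) = mulL lam (NF lam x) (NF lam y) := by
  induction x with
  | nil => rw [NF_nil, mul_nil_left]; rfl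
  | cons l x ih =>
    rw [List.cons_append, NF_cons, ih, ← mul_assoc3, ← NF_cons]

lemma NF_flr' (w : W Z) (hw : w ≠ []) : NF lam (flr' w) = PL (NF lam w) := by
  cases w with
  | nil => exact absurd rfl hw
  | cons h t =>
    rw [show flr' (h :: t) = [BLtr.flr h t] from rfl, NF_cons_flr, NF_nil, mul_nil_right]

lemma NF_RB (x y : W Z) (hx : x ≠ []) (hy : y ≠ []) :
    NF lam (flr' x ++ flr' y)
      = NF lam (flr' (x ++ flr' y)) + NF lam (flr' (flr' x ++ y))
        + lam • NF lam (flr' (x ++ y)) := by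
  have hxy : x ++ flr' y ≠ [] := by
    intro h; rcases List.append_eq_nil_iff.mp h with ⟨h1, _⟩; exact hx h1
  have hxy2 : flr' x ++ y ≠ [] := by
    intro h; rcases List.append_eq_nil_iff.mp h with ⟨_, h2⟩; exact hy h2
  have hxy3 : x ++ y ≠ [] := by
    intro h; rcases List.append_eq_nil_iff.mp h with ⟨h1, _⟩; exact hx h1
  rw [NF_append, NF_flr' lam x hx, NF_flr' lam y hy, NF_flr' lam _ hxy, NF_flr' lam _ hxy2,
    NF_flr' lam _ hxy3, NF_append, NF_append, NF_append, NF_flr' lam x hx, NF_flr' lam y hy]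
  exact RBid lam _ _ (NF_ne lam x hx) (NF_ne lam y hy)

lemma BWord_flr_val (w : BWord Z) : (BWord.flr w).1 = flr' w.1 := by
  obtain ⟨l, hl⟩ := w
  cases l with
  | nil => exact absurd rfl hl
  | cons h t => rfl

lemma cat_val (u v : BWord Z) : (BWord.cat u v).1 = u.1 ++ v.1 := rfl

lemma subst_base_val (l r : List (BLtr Z)) (u : BWord Z) :
    ((Ctx.base l r).subst u).1 = l ++ u.1 ++ r := rfl

lemma subst_deep_val (l r : List (BLtr Z)) (q : Ctx Z) (u : BWord Z) :
    ((Ctx.deep l r q).subst u).1 = l ++ flr' (q.subst u).1 ++ r := by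
  show l ++ (BWord.flr (q.subst u)).1 ++ r = _
  rw [BWord_flr_val]

lemma NF_ctx (q : Ctx Z) (w₀ w₁ w₂ w₃ : BWord Z)
    (h : NF lam w₀.1 = NF lam w₁.1 + NF lam w₂.1 + lam • NF lam w₃.1) :
    NF lam (q.subst w₀).1
      = NF lam (q.subst w₁).1 + NF lam (q.subst w₂).1 + lam • NF lam (q.subst w₃).1 := by
  induction q with
  | base l r =>
    simp only [subst_base_val, NF_append, h]
    simp only [map_add, map_smul, LinearMap.add_apply, LinearMap.smul_apply]
  | deep l r q ih =>
    simp only [subst_deep_val, NF_append, NF_flr' lam _ (q.subst _).2, ih]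
    simp only [map_add, map_smul, LinearMap.add_apply, LinearMap.smul_apply]

lemma NF_base (x y : BWord Z) :
    NF lam ((x.flr.cat y.flr).1)
      = NF lam ((BWord.flr (x.cat y.flr)).1) + NF lam ((BWord.flr (x.flr.cat y)).1)
        + lam • NF lam ((BWord.flr (x.cat y)).1) := by
  simp only [cat_val, BWord_flr_val]
  exact NF_RB lam x.1 y.1 x.2 y.2

lemma NF_inv (q : Ctx Z) (x y : BWord Z) :
    NF lam (q.subst (x.flr.cat y.flr)).1
      = NF lam (q.subst (BWord.flr (x.cat y.flr))).1
        + NF lam (q.subst (BWord.flr (x.flr.cat y))).1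
        + lam • NF lam (q.subst (BWord.flr (x.cat y))).1 :=
  NF_ctx lam q _ _ _ _ (NF_base lam x y)

def hasOcc (w : W Z) : Prop :=
  ∃ (q : Ctx Z) (x y : BWord Z), w = (q.subst (x.flr.cat y.flr)).1

lemma hasOcc_cons {w : W Z} (l : BLtr Z) (h : hasOcc w) : hasOcc (l :: w) := by
  obtain ⟨q, x, y, rfl⟩ := h
  cases q with
  | base L R =>
    exact ⟨Ctx.base (l :: L) R, x, y, by simp [subst_base_val]⟩
  | deep L R q' =>
    exact ⟨Ctx.deep (l :: L) R q', x, y, by simp [subst_deep_val]⟩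

lemma hasOcc_inner {h0 : BLtr Z} {t w : W Z} (h : hasOcc (h0 :: t)) :
    hasOcc (BLtr.flr h0 t :: w) := by
  obtain ⟨q, x, y, he⟩ := h
  refine ⟨Ctx.deep [] w q, x, y, ?_⟩
  rw [subst_deep_val, ← he]
  simp [flr']

lemma hasOcc_top (l₁ l₂ : W Z) (hx : BLtr Z) (tx : W Z) (hy : BLtr Z) (ty : W Z) :
    hasOcc (l₁ ++ BLtr.flr hx tx :: BLtr.flr hy ty :: l₂) := by
  refine ⟨Ctx.base l₁ l₂, ⟨hx :: tx, by simp⟩, ⟨hy :: ty, by simp⟩, ?_⟩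
  rw [subst_base_val, cat_val]
  simp [BWord.flr, flr']

lemma NF_fix : ∀ w : W Z, ¬ hasOcc w → NF lam w = Finsupp.single w 1 := by
  intro w
  induction w using NF.induct with
  | case1 => intro _; exact NF_nil lam
  | case2 z w ih =>
    intro hw
    rw [NF_cons_of, ih (fun h => hw (hasOcc_cons _ h)), mul_single_one]
    cases w with
    | nil => rw [m_nil_right]
    | cons b w' =>
      have := noclash_m lam [] (BLtr.of z) b w' (by intro _ _ _ _ hh; cases hh.1)
      simpa using this
  | case3 h0 t w ih1 ih2 =>
    intro hw
    rw [NF_cons_flr, ih1 (fun h => hw (hasOcc_inner h)), PL_single,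
      ih2 (fun h => hw (hasOcc_cons _ h)), mul_single_one]
    cases w with
    | nil => rw [show flr' (h0 :: t) = [BLtr.flr h0 t] from rfl, m_nil_right]
    | cons b w' =>
      cases b with
      | of z =>
        rw [show flr' (h0 :: t) = [BLtr.flr h0 t] from rfl,
          m_cons_noflr_right lam _ _ _ (by intro _ _ hh; cases hh)]
        simp
      | flr hb tb =>
        exact absurd (by simpa using hasOcc_top [] w' h0 t hb tb) hw

noncomputable def rr : (BWord Z →₀ k) →ₗ[k] AV Z k :=
  Finsupp.lsum k fun w => LinearMap.toSpanSingleton k (AV Z k) (NF lam w.1)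

lemma rr_single (w : BWord Z) (c : k) :
    rr lam (Finsupp.single w c) = c • NF lam w.1 := by
  simp [rr, Finsupp.lsum_single, LinearMap.toSpanSingleton_apply]

lemma rr_apply (f : BWord Z →₀ k) : rr lam f = f.sum fun w c => c • NF lam w.1 := by
  rw [rr, Finsupp.lsum_apply]
  apply Finsupp.sum_congr
  intro w _
  rw [LinearMap.toSpanSingleton_apply]

lemma rr_step {f g : BWord Z →₀ k} (h : RBStep lam f g) : rr lam g = rr lam f := by
  obtain ⟨q, x, y, hne, rfl⟩ := h
  simp only [map_add, map_sub, map_smul, rr_single]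
  rw [NF_inv lam q x y]
  simp only [smul_add, one_smul]
  abel

lemma rr_rtg {f g : BWord Z →₀ k} (h : Relation.ReflTransGen (RBStep lam) f g) :
    rr lam g = rr lam f := by
  induction h with
  | refl => rfl
  | tail _ hstep ih => rw [rr_step lam hstep, ih]

lemma rr_of_normal {f : BWord Z →₀ k} (hf : ∀ g, ¬ RBStep lam f g) :
    rr lam f = Finsupp.mapDomain Subtype.val f := by
  classical
  have hsupp : ∀ w ∈ f.support, ¬ hasOcc w.1 := by
    intro w hw hocc
    obtain ⟨q, x, y, he⟩ := hocc
    have hwq : w = q.subst (x.flr.cat y.flr) := Subtype.ext he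
    refine hf _ ⟨q, x, y, ?_, rfl⟩
    rw [← hwq]
    exact Finsupp.mem_support_iff.mp hw
  rw [rr_apply]
  unfold Finsupp.mapDomain
  apply Finsupp.sum_congr
  intro w hw
  rw [NF_fix lam w.1 (hsupp w hw), Finsupp.smul_single, smul_eq_mul, mul_one]

noncomputable def mu (f : BWord Z →₀ k) : ℕ := ∑ w ∈ f.support, 4 ^ phiW w.1

lemma phiW_subst_lt (q : Ctx Z) {a b : BWord Z} (h : phiW a.1 < phiW b.1) :
    phiW (q.subst a).1 < phiW (q.subst b).1 := by
  induction q with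
  | base l r =>
    simp only [subst_base_val, phiW_append]
    have hl := phiW_one_le l
    have hr := phiW_one_le r
    have h1 : phiW l * phiW a.1 < phiW l * phiW b.1 :=
      Nat.mul_lt_mul_of_le_of_lt le_rfl h (by omega)
    exact Nat.mul_lt_mul_of_lt_of_le h1 le_rfl (by omega)
  | deep l r q ih =>
    simp only [subst_deep_val, phiW_append, phiW_flr' (q.subst _).2]
    have hl := phiW_one_le l
    have hr := phiW_one_le r
    have h1 : phiW l * (phiW (q.subst a).1 + 1) < phiW l * (phiW (q.subst b).1 + 1) :=
      Nat.mul_lt_mul_of_le_of_lt le_rfl (by omega) (by omega)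
    exact Nat.mul_lt_mul_of_lt_of_le h1 le_rfl (by omega)

lemma flr'_ne {w : W Z} (h : w ≠ []) : flr' w ≠ [] := by
  cases w with
  | nil => exact absurd rfl h
  | cons a t => simp [flr']

lemma phiW_base1 (x y : BWord Z) :
    phiW ((BWord.flr (x.cat y.flr)).1) < phiW ((x.flr.cat y.flr).1) := by
  have hne : x.1 ++ flr' y.1 ≠ [] := fun h => x.2 (List.append_eq_nil_iff.mp h).1
  simp only [BWord_flr_val, cat_val, phiW_append, phiW_flr' x.2, phiW_flr' y.2,
    phiW_flr' hne]
  have h1 := phiW_one_le x.1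
  have h2 := phiW_one_le y.1
  nlinarith

lemma phiW_base2 (x y : BWord Z) :
    phiW ((BWord.flr (x.flr.cat y)).1) < phiW ((x.flr.cat y.flr).1) := by
  have hne : flr' x.1 ++ y.1 ≠ [] := fun h => flr'_ne x.2 (List.append_eq_nil_iff.mp h).1
  simp only [BWord_flr_val, cat_val, phiW_append, phiW_flr' x.2, phiW_flr' y.2,
    phiW_flr' hne]
  have h1 := phiW_one_le x.1
  have h2 := phiW_one_le y.1
  nlinarith

lemma phiW_base3 (x y : BWord Z) :
    phiW ((BWord.flr (x.cat y)).1) < phiW ((x.flr.cat y.flr).1) := by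
  have hne : x.1 ++ y.1 ≠ [] := fun h => x.2 (List.append_eq_nil_iff.mp h).1
  simp only [BWord_flr_val, cat_val, phiW_append, phiW_flr' x.2, phiW_flr' y.2,
    phiW_flr' hne]
  have h1 := phiW_one_le x.1
  have h2 := phiW_one_le y.1
  nlinarith

lemma sum_insert_le' {α : Type*} [DecidableEq α] (a : α) (s : Finset α) (f : α → ℕ) :
    ∑ w ∈ insert a s, f w ≤ f a + ∑ w ∈ s, f w := by
  by_cases h : a ∈ s
  · rw [Finset.insert_eq_self.mpr h]; omega
  · rw [Finset.sum_insert h]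

lemma sum_union_le' {α : Type*} [DecidableEq α] (s t : Finset α) (f : α → ℕ) :
    ∑ w ∈ s ∪ t, f w ≤ (∑ w ∈ s, f w) + ∑ w ∈ t, f w := by
  have := Finset.sum_union_inter (s₁ := s) (s₂ := t) (f := f)
  omega

lemma mu_lt {f g : BWord Z →₀ k} (h : RBStep lam f g) : mu (k := k) g < mu f := by
  classical
  obtain ⟨q, x, y, hne, rfl⟩ := h
  set t := q.subst (x.flr.cat y.flr) with ht
  set a1 := q.subst (BWord.flr (x.cat y.flr)) with ha1
  set a2 := q.subst (BWord.flr (x.flr.cat y)) with ha2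
  set a3 := q.subst (BWord.flr (x.cat y)) with ha3
  set gg := f - Finsupp.single t (f t) + f t •
      (Finsupp.single a1 (1:k) + Finsupp.single a2 1 + lam • Finsupp.single a3 1) with hgg
  have hl1 : phiW a1.1 < phiW t.1 := phiW_subst_lt q (phiW_base1 x y)
  have hl2 : phiW a2.1 < phiW t.1 := phiW_subst_lt q (phiW_base2 x y)
  have hl3 : phiW a3.1 < phiW t.1 := phiW_subst_lt q (phiW_base3 x y)
  have hne1 : a1 ≠ t := fun h => absurd (h ▸ hl1) (lt_irrefl _)
  have hne2 : a2 ≠ t := fun h => absurd (h ▸ hl2) (lt_irrefl _)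
  have hne3 : a3 ≠ t := fun h => absurd (h ▸ hl3) (lt_irrefl _)
  have htmem : t ∈ f.support := Finsupp.mem_support_iff.mpr hne
  have hsub : gg.support ⊆ (f.support.erase t) ∪ {a1, a2, a3} := by
    intro s hs
    have hs' := Finsupp.mem_support_iff.mp hs
    by_cases h1 : s = a1
    · exact Finset.mem_union_right _ (by simp [h1])
    by_cases h2 : s = a2
    · exact Finset.mem_union_right _ (by simp [h2])
    by_cases h3 : s = a3
    · exact Finset.mem_union_right _ (by simp [h3])
    by_cases hst : s = t
    · exfalso
      apply hs'
      subst hst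
      rw [hgg]
      simp only [Finsupp.add_apply, Finsupp.sub_apply, Finsupp.smul_apply,
        Finsupp.single_eq_same]
      rw [Finsupp.single_eq_of_ne' hne1, Finsupp.single_eq_of_ne' hne2,
        Finsupp.single_eq_of_ne' hne3]
      simp
    · apply Finset.mem_union_left
      rw [Finset.mem_erase]
      refine ⟨hst, Finsupp.mem_support_iff.mpr ?_⟩
      intro hfs
      apply hs'
      rw [hgg]
      simp only [Finsupp.add_apply, Finsupp.sub_apply, Finsupp.smul_apply]
      rw [Finsupp.single_eq_of_ne' (fun hh => hst hh.symm),
        Finsupp.single_eq_of_ne' (fun hh => h1 hh.symm),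
        Finsupp.single_eq_of_ne' (fun hh => h2 hh.symm),
        Finsupp.single_eq_of_ne' (fun hh => h3 hh.symm), hfs]
      simp
  have hP : 2 ≤ phiW t.1 := phiW_two_le t.2
  have hpow : ∀ p : ℕ, p < phiW t.1 → 4 ^ p ≤ 4 ^ (phiW t.1 - 1) :=
    fun p hp => Nat.pow_le_pow_right (by norm_num) (by omega)
  have hbig : (4:ℕ) ^ (phiW t.1 - 1) * 4 = 4 ^ phiW t.1 := by
    rw [← pow_succ]
    congr 1
    omega
  have hpos : 0 < (4:ℕ) ^ (phiW t.1 - 1) := Nat.pow_pos (by norm_num)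
  calc mu gg ≤ ∑ w ∈ (f.support.erase t) ∪ {a1, a2, a3}, 4 ^ phiW w.1 :=
        Finset.sum_le_sum_of_subset hsub
    _ ≤ (∑ w ∈ f.support.erase t, 4 ^ phiW w.1)
        + ∑ w ∈ ({a1, a2, a3} : Finset (BWord Z)), 4 ^ phiW w.1 :=
        sum_union_le' _ _ _
    _ ≤ (∑ w ∈ f.support.erase t, 4 ^ phiW w.1)
        + (4 ^ phiW a1.1 + (4 ^ phiW a2.1 + 4 ^ phiW a3.1)) := by
        gcongr
        refine le_trans (sum_insert_le' _ _ _) ?_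
        gcongr
        refine le_trans (sum_insert_le' _ _ _) ?_
        gcongr
        simp
    _ ≤ (∑ w ∈ f.support.erase t, 4 ^ phiW w.1) + 3 * 4 ^ (phiW t.1 - 1) := by
        have b1 := hpow _ hl1
        have b2 := hpow _ hl2
        have b3 := hpow _ hl3
        omega
    _ < (∑ w ∈ f.support.erase t, 4 ^ phiW w.1) + 4 ^ phiW t.1 := by omega
    _ = mu f := by
        rw [mu, ← Finset.add_sum_erase _ _ htmem]
        omega

lemma reach (f : BWord Z →₀ k) :
    ∃ h, Relation.ReflTransGen (RBStep lam) f h ∧ ∀ g, ¬ RBStep lam h g := by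
  classical
  suffices H : ∀ n (f : BWord Z →₀ k), mu f ≤ n →
      ∃ h, Relation.ReflTransGen (RBStep lam) f h ∧ ∀ g, ¬ RBStep lam h g from
    H (mu f) f le_rfl
  intro n
  induction n using Nat.strong_induction_on with
  | _ n ih =>
    intro f hf
    by_cases hstep : ∃ g, RBStep lam f g
    · obtain ⟨g, hg⟩ := hstep
      have hlt := mu_lt lam hg
      obtain ⟨h, hh1, hh2⟩ := ih (mu g) (by omega) g le_rfl
      exact ⟨h, Relation.ReflTransGen.head hg hh1, hh2⟩
    · exact ⟨f, Relation.ReflTransGen.refl, fun g hg => hstep ⟨g, hg⟩⟩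

theorem RB_terminating : RelTerminating (RBStep (Z := Z) (k := k) lam) := by
  rintro ⟨F, hF⟩
  have hdec : ∀ n, mu (F (n + 1)) < mu (F n) := fun n => mu_lt lam (hF n)
  have hb : ∀ n, mu (F n) + n ≤ mu (F 0) := by
    intro n
    induction n with
    | zero => omega
    | succ n ihn =>
      have := hdec n
      omega
  have := hb (mu (F 0) + 1)
  omega

theorem RB_confluent : RelConfluent (RBStep (Z := Z) (k := k) lam) := by
  intro f g1 g2 h1 h2
  obtain ⟨e1, he1, hn1⟩ := reach lam g1
  obtain ⟨e2, he2, hn2⟩ := reach lam g2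
  have heq : e1 = e2 := by
    apply Finsupp.mapDomain_injective (Subtype.coe_injective)
    rw [← rr_of_normal lam hn1, ← rr_of_normal lam hn2,
      rr_rtg lam he1, rr_rtg lam he2, rr_rtg lam h1, rr_rtg lam h2]
  exact ⟨e1, he1, heq ▸ he2⟩

end RBaux

/-- The rewriting system of the Rota-Baxter operator identity of weight `λ` is
convergent: terminating and confluent. -/
theorem rotaBaxter_rewriting_convergent {Z k : Type*} [Field k] (lam : k) :
    RelTerminating (RBStep (Z := Z) (k := k) lam) ∧
      RelConfluent (RBStep (Z := Z) (k := k) lam) :=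
  ⟨RBaux.RB_terminating lam, RBaux.RB_confluent lam⟩
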